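/- If for two jobs j, j' it holds that for every possession R ∈ ℛ_j there exists a possession R' ∈ ℛ_{j'} with R' ⊆ R, then removing job j' from the instance does not change the optimal objective value: the minimum cardinality of ⋃_j R_j over feasible selections for 𝒥 equals that over feasible selections for 𝒥 ∖ {j'}. -/
import Mathlib


open Finset
open scoped Classical

/-- If for jobs `j, j'` every possession `R ∈ ℛ j` contains some possession
`R' ∈ ℛ j'`, then removing job `j'` does not change the optimal objective value:
the minimum cardinality of `⋃_i R_i` over feasible selections for the full job set
equals that over the job set without `j'`. -/
theorem remove_dominated_job {α ι : Type*} [DecidableEq α] [DecidableEq ι] [Fintype ι]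
    (ℛ : ι → Finset (Finset α)) (hR : ∀ i, (ℛ i).Nonempty)
    (j j' : ι) (hne : j ≠ j')
    (hdom : ∀ R ∈ ℛ j, ∃ R' ∈ ℛ j', R' ⊆ R) :
    sInf {n | ∃ f : ι → Finset α, (∀ i, f i ∈ ℛ i) ∧
        n = (Finset.univ.biUnion f).card}
      = sInf {n | ∃ f : ι → Finset α, (∀ i, f i ∈ ℛ i) ∧
        n = ((Finset.univ.erase j').biUnion f).card} := by
  apply le_antisymm
  · apply le_csInf
    · exact ⟨_, fun i => (hR i).choose, fun i => (hR i).choose_spec, rfl⟩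
    · rintro n ⟨f, hf, rfl⟩
      obtain ⟨R', hR', hsub⟩ := hdom (f j) (hf j)
      set g : ι → Finset α := fun i => if i = j' then R' else f i with hg
      have hgmem : ∀ i, g i ∈ ℛ i := by
        intro i
        by_cases h : i = j'
        · simp [hg, h, hR']
        · simp [hg, h, hf i]
      have hsub2 : Finset.univ.biUnion g ⊆ (Finset.univ.erase j').biUnion f := by
        intro x hx
        obtain ⟨i, _, hxi⟩ := Finset.mem_biUnion.mp hx
        by_cases h : i = j'
        · exact Finset.mem_biUnion.mpr ⟨j, Finset.mem_erase.mpr ⟨hne, Finset.mem_univ j⟩,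
            hsub (by simpa [hg, h] using hxi)⟩
        · exact Finset.mem_biUnion.mpr ⟨i, Finset.mem_erase.mpr ⟨h, Finset.mem_univ i⟩,
            by simpa [hg, h] using hxi⟩
      exact le_trans (Nat.sInf_le ⟨g, hgmem, rfl⟩) (Finset.card_le_card hsub2)
  · apply le_csInf
    · exact ⟨_, fun i => (hR i).choose, fun i => (hR i).choose_spec, rfl⟩
    · rintro n ⟨f, hf, rfl⟩
      exact le_trans (Nat.sInf_le ⟨f, hf, rfl⟩)
        (Finset.card_le_card (Finset.biUnion_subset_biUnion_of_subset_left f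
          (Finset.erase_subset _ _)))
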